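/- arXiv:1504.04047 — 3 statements merged into one kernel-verified Lean document; each statement's English description precedes it below -/
import Mathlib

section
/- Let α ∈ (0, 1), λ = (1−α)/(1+α), M > 0, and let g : ℝ → ℝ be bounded with g(t) = 0 for all t ∉ [0, 2M]. Let f be the causal solution of the delay equation, f(t) = (2/(1+α)) Σ_{j=0}^{∞} (−λ)^j g(t − 2j). Then there is a constant C > 0 (depending only on M and λ) such that for all t ≥ 0, |f(t)| ≤ C · λ^{t/2} · sup_{s∈ℝ} |g(s)|. In particular f decays exponentially in t at rate determined by λ = (1−α)/(1+α). -/
/-!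
STATEMENT 9: For `α ∈ (0,1)`, `λ = (1−α)/(1+α)`, `M > 0`, and bounded data `g` supported in
`[0, 2M]`, the causal solution `f(t) = (2/(1+α)) Σ_{j=0}^∞ (−λ)^j g(t−2j)` of the delay
equation decays exponentially: there is `C > 0` (depending only on `M` and `λ`) with
`|f(t)| ≤ C · λ^{t/2} · sup_{s} |g(s)|` for all `t ≥ 0`.
-/

noncomputable section

theorem delay_equation_exponential_decay
    (α : ℝ) (hα : α ∈ Set.Ioo (0 : ℝ) 1)
    (lam : ℝ) (hlam : lam = (1 - α) / (1 + α))
    (M : ℝ) (hM : 0 < M)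
    (g : ℝ → ℝ) (hg_bdd : ∃ B, ∀ s : ℝ, |g s| ≤ B)
    (hg_supp : ∀ t : ℝ, t ∉ Set.Icc (0 : ℝ) (2 * M) → g t = 0)
    (f : ℝ → ℝ)
    (hf : ∀ t : ℝ, f t = (2 / (1 + α)) * ∑' j : ℕ, (-lam) ^ j * g (t - 2 * j)) :
    ∃ C > (0 : ℝ), ∀ t ≥ (0 : ℝ),
      |f t| ≤ C * Real.rpow lam (t / 2) * ⨆ s : ℝ, |g s| := by
  obtain ⟨B, hB⟩ := hg_bdd
  have hbdd : BddAbove (Set.range fun s => |g s|) := ⟨B, by rintro x ⟨s, rfl⟩; exact hB s⟩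
  set S := ⨆ s : ℝ, |g s| with hSdef
  have hS : ∀ s : ℝ, |g s| ≤ S := fun s => le_ciSup hbdd s
  have hS0 : (0 : ℝ) ≤ S := le_trans (abs_nonneg _) (hS 0)
  have hα0 := hα.1
  have hα1 := hα.2
  have h1α : (0 : ℝ) < 1 + α := by linarith
  have hlam0 : 0 < lam := by rw [hlam]; exact div_pos (by linarith) h1α
  have hlam1 : lam < 1 := by rw [hlam, div_lt_one h1α]; linarith
  have hrp : ∀ x y : ℝ, Real.rpow x y = x ^ y := fun _ _ => rfl
  refine ⟨(2 / (1 + α)) * (M + 1) * Real.rpow lam (-M), by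
    rw [hrp]
    have := Real.rpow_pos_of_pos hlam0 (-M)
    positivity, ?_⟩
  intro t ht
  simp only [hrp]
  rw [hf]
  set j0 : ℕ := Nat.ceil ((t - 2 * M) / 2) with hj0def
  set b : ℕ := Nat.floor (t / 2) with hbdef
  have hsupp : ∀ j ∉ Finset.Icc j0 b, (-lam) ^ j * g (t - 2 * j) = 0 := by
    intro j hj
    rw [Finset.mem_Icc] at hj
    push_neg at hj
    have hg0 : g (t - 2 * j) = 0 := by
      apply hg_supp
      intro hmem
      rcases le_or_gt j0 j with h1 | h1
      · -- then b < j, so t/2 < j, so t - 2j < 0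
        have h2 := hj h1
        have h3 : t / 2 < (j : ℝ) := by
          rw [hbdef] at h2
          exact (Nat.floor_lt (by positivity)).mp h2
        have := hmem.1
        nlinarith
      · -- j < j0, so j < (t-2M)/2, so t - 2j > 2M
        have h3 : (j : ℝ) < (t - 2 * M) / 2 := by
          rw [hj0def] at h1
          exact Nat.lt_ceil.mp h1
        have := hmem.2
        nlinarith
    rw [hg0, mul_zero]
  rw [tsum_eq_sum hsupp, abs_mul]
  have habs : |2 / (1 + α)| = 2 / (1 + α) := abs_of_pos (by positivity)
  rw [habs]
  have key : |∑ j ∈ Finset.Icc j0 b, (-lam) ^ j * g (t - 2 * j)| ≤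
      (M + 1) * (lam ^ ((t - 2 * M) / 2) * S) := by
    calc |∑ j ∈ Finset.Icc j0 b, (-lam) ^ j * g (t - 2 * j)|
        ≤ ∑ j ∈ Finset.Icc j0 b, |(-lam) ^ j * g (t - 2 * j)| :=
          Finset.abs_sum_le_sum_abs _ _
      _ ≤ ∑ j ∈ Finset.Icc j0 b, lam ^ ((t - 2 * M) / 2) * S := by
          apply Finset.sum_le_sum
          intro j hj
          rw [Finset.mem_Icc] at hj
          have hjge : (t - 2 * M) / 2 ≤ (j : ℝ) := by
            have h1 : (t - 2 * M) / 2 ≤ (j0 : ℝ) := Nat.le_ceil _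
            have h2 : (j0 : ℝ) ≤ (j : ℝ) := by exact_mod_cast hj.1
            linarith
          have hpow : |(-lam) ^ j| = lam ^ (j : ℝ) := by
            rw [Real.rpow_natCast, abs_pow, abs_neg, abs_of_pos hlam0]
          rw [abs_mul, hpow]
          have h1 : lam ^ (j : ℝ) ≤ lam ^ ((t - 2 * M) / 2) :=
            Real.rpow_le_rpow_of_exponent_ge hlam0 hlam1.le hjge
          have h2 : |g (t - 2 * j)| ≤ S := hS _
          have h3 : (0 : ℝ) ≤ lam ^ (j : ℝ) := Real.rpow_nonneg hlam0.le _
          exact mul_le_mul h1 h2 (abs_nonneg _) (Real.rpow_nonneg hlam0.le _)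
      _ = (Finset.Icc j0 b).card * (lam ^ ((t - 2 * M) / 2) * S) := by
          rw [Finset.sum_const, nsmul_eq_mul]
      _ ≤ (M + 1) * (lam ^ ((t - 2 * M) / 2) * S) := by
          apply mul_le_mul_of_nonneg_right _
            (mul_nonneg (Real.rpow_nonneg hlam0.le _) hS0)
          rw [Nat.card_Icc]
          rcases le_or_gt j0 b with h | h
          · have hc : ((b + 1 - j0 : ℕ) : ℝ) = (b : ℝ) + 1 - (j0 : ℝ) := by
              rw [Nat.cast_sub (by omega)]; push_cast; ring
            rw [hc]
            have h1 : (b : ℝ) ≤ t / 2 := Nat.floor_le (by positivity)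
            have h2 : (t - 2 * M) / 2 ≤ (j0 : ℝ) := Nat.le_ceil _
            linarith
          · have : b + 1 - j0 = 0 := by omega
            rw [this]
            push_cast
            linarith
  calc (2 / (1 + α)) * |∑ j ∈ Finset.Icc j0 b, (-lam) ^ j * g (t - 2 * j)|
      ≤ (2 / (1 + α)) * ((M + 1) * (lam ^ ((t - 2 * M) / 2) * S)) :=
        mul_le_mul_of_nonneg_left key (by positivity)
    _ = (2 / (1 + α)) * (M + 1) * lam ^ (-M : ℝ) * lam ^ (t / 2) * S := by
        rw [show (t - 2 * M) / 2 = t / 2 + (-M) by ring, Real.rpow_add hlam0]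
        ring

end
end

section
/- Let α ∈ ℝ and let f : ℝ → ℝ be measurable with f(t) = 0 for t < 0. Let τ > 0 be a real number such that ∫_0^∞ e^{−τt} |f(t)| dt < ∞. Then ∫_0^∞ e^{−τt} [ ((1+α)/2) f(t) + ((1−α)/2) f(t−2) − (1/2) ∫_{t−2}^t f(u) du ] dt = γ_0^α(τ) · ∫_0^∞ e^{−τt} f(t) dt, where γ_0^α(τ) = (1/2)[ 1 + e^{−2τ} + (α − 1/τ)(1 − e^{−2τ}) ]. -/
/-!
STATEMENT 10: Under the Laplace transform `ℒf(τ) = ∫_0^∞ e^{−τt} f(t) dt`, the degree-0 mode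
operator `G_0^{α,0} f(t) = ((1+α)/2) f(t) + ((1−α)/2) f(t−2) − (1/2)∫_{t−2}^t f(u) du`
acts as multiplication by the symbol
`γ_0^α(τ) = (1/2)[1 + e^{−2τ} + (α − 1/τ)(1 − e^{−2τ})]`.
-/

set_option maxHeartbeats 1000000

open MeasureTheory

lemma shift_int (f : ℝ → ℝ) (hf0 : ∀ t < (0:ℝ), f t = 0)
    (τ c : ℝ) (hc : 0 < c)
    (hint : IntegrableOn (fun t => Real.exp (-τ * t) * f t) (Set.Ioi 0)) :
    IntegrableOn (fun t => Real.exp (-τ * t) * f (t - c)) (Set.Ioi 0) ∧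
    ∫ t in Set.Ioi (0:ℝ), Real.exp (-τ * t) * f (t - c)
      = Real.exp (-τ * c) * ∫ t in Set.Ioi (0:ℝ), Real.exp (-τ * t) * f t := by
  set h : ℝ → ℝ := (Set.Ioi (0:ℝ)).indicator (fun s => Real.exp (-τ * s) * f s) with hh
  have hms : MeasurableSet (Set.Ioi (0:ℝ)) := measurableSet_Ioi
  have hInd : Integrable h := (integrable_indicator_iff hms).2 hint
  have hae : (Set.Ioi (0:ℝ)).indicator (fun t => Real.exp (-τ * t) * f (t - c))
      =ᵐ[volume] fun t => Real.exp (-τ * c) * h (t - c) := by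
    have hc' : ∀ᵐ t : ℝ, t ≠ c := by
      rw [ae_iff]
      simpa using measure_singleton c
    filter_upwards [hc'] with t htc
    by_cases h1 : 0 < t - c
    · have h2 : 0 < t := by linarith
      rw [Set.indicator_of_mem (Set.mem_Ioi.2 h2), hh,
        Set.indicator_of_mem (Set.mem_Ioi.2 h1)]
      rw [← mul_assoc, ← Real.exp_add]
      ring_nf
    · have h1' : t - c < 0 := lt_of_le_of_ne (not_lt.1 h1) (sub_ne_zero.2 htc)
      have hzero : h (t - c) = 0 :=
        Set.indicator_of_notMem (by simp only [Set.mem_Ioi, not_lt]; linarith) _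
      rw [hzero, mul_zero]
      by_cases h2 : 0 < t
      · rw [Set.indicator_of_mem (Set.mem_Ioi.2 h2), hf0 _ h1', mul_zero]
      · rw [Set.indicator_of_notMem (by simpa using h2)]
  have hInt2 : Integrable (fun t => Real.exp (-τ * c) * h (t - c)) :=
    (hInd.comp_sub_right c).const_mul _
  constructor
  · rw [← integrable_indicator_iff hms]
    exact hInt2.congr hae.symm
  · calc ∫ t in Set.Ioi (0:ℝ), Real.exp (-τ*t) * f (t-c)
        = ∫ t, (Set.Ioi (0:ℝ)).indicator (fun t => Real.exp (-τ*t) * f (t-c)) t :=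
          (integral_indicator hms).symm
      _ = ∫ t, Real.exp (-τ*c) * h (t-c) := integral_congr_ae hae
      _ = Real.exp (-τ*c) * ∫ t, h (t-c) := integral_const_mul _ _
      _ = Real.exp (-τ*c) * ∫ t, h t := by rw [integral_sub_right_eq_self h c]
      _ = _ := by rw [integral_indicator hms]

noncomputable section

theorem mode_zero_laplace_multiplier
    (α : ℝ) (f : ℝ → ℝ) (hf_meas : Measurable f)
    (hf0 : ∀ t < (0 : ℝ), f t = 0)
    (τ : ℝ) (hτ : 0 < τ)
    (hf_int : (∫⁻ t in Set.Ioi (0 : ℝ),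
        ENNReal.ofReal (Real.exp (-τ * t) * |f t|)) < ⊤) :
    (∫ t in Set.Ioi (0 : ℝ), Real.exp (-τ * t) *
        (((1 + α) / 2) * f t + ((1 - α) / 2) * f (t - 2)
          - (1 / 2) * ∫ u in (t - 2)..t, f u))
      = ((1 / 2) * (1 + Real.exp (-2 * τ)
            + (α - 1 / τ) * (1 - Real.exp (-2 * τ))))
          * ∫ t in Set.Ioi (0 : ℝ), Real.exp (-τ * t) * f t := by
  have hms : MeasurableSet (Set.Ioi (0:ℝ)) := measurableSet_Ioi
  -- integrability of e^{-τt} f t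
  have hmeas1 : Measurable fun t : ℝ => Real.exp (-τ * t) * f t :=
    ((Real.measurable_exp.comp (measurable_const.mul measurable_id)).mul hf_meas)
  have hnorm_eq : ∀ t : ℝ, ENNReal.ofReal (Real.exp (-τ * t) * |f t|)
      = (‖Real.exp (-τ * t) * f t‖₊ : ENNReal) := by
    intro t
    rw [← enorm_eq_nnnorm, Real.enorm_eq_ofReal_abs, abs_mul, abs_of_pos (Real.exp_pos _)]
  have hint1 : IntegrableOn (fun t => Real.exp (-τ * t) * f t) (Set.Ioi 0) := by
    refine ⟨hmeas1.aestronglyMeasurable, ?_⟩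
    show (∫⁻ t in Set.Ioi (0:ℝ), ‖Real.exp (-τ * t) * f t‖₊) < ⊤
    have heq : (∫⁻ t in Set.Ioi (0:ℝ), (‖Real.exp (-τ * t) * f t‖₊ : ENNReal))
        = ∫⁻ t in Set.Ioi (0:ℝ), ENNReal.ofReal (Real.exp (-τ * t) * |f t|) :=
      lintegral_congr fun t => (hnorm_eq t).symm
    rw [heq]
    exact hf_int
  -- integrability of e^{-τt} |f t|
  have habs0 : ∀ t < (0:ℝ), |f t| = 0 := fun t ht => by rw [hf0 t ht, abs_zero]
  have hinta : IntegrableOn (fun t => Real.exp (-τ * t) * |f t|) (Set.Ioi 0) := by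
    have := hint1.abs
    refine this.congr (Filter.Eventually.of_forall fun t => ?_)
    show |Real.exp (-τ * t) * f t| = Real.exp (-τ * t) * |f t|
    rw [abs_mul, abs_of_pos (Real.exp_pos _)]
  -- shift by 2
  obtain ⟨hi2, he2⟩ := shift_int f hf0 τ 2 two_pos hint1
  set L := ∫ t in Set.Ioi (0:ℝ), Real.exp (-τ * t) * f t with hL
  set La := ∫ t in Set.Ioi (0:ℝ), Real.exp (-τ * t) * |f t| with hLa
  -- the convolution kernel
  set F : ℝ → ℝ → ℝ := fun v t => Real.exp (-τ * t) * f (t - v) with hF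
  set μ := volume.restrict (Set.Ioc (0:ℝ) 2) with hμ
  set ν := volume.restrict (Set.Ioi (0:ℝ)) with hν
  have hFmeas : AEStronglyMeasurable (Function.uncurry F) (μ.prod ν) := by
    apply Measurable.aestronglyMeasurable
    exact ((Real.measurable_exp.comp (measurable_const.mul measurable_snd)).mul
      (hf_meas.comp (measurable_snd.sub measurable_fst)))
  have hsec : ∀ᵐ v ∂μ, Integrable (F v) ν := by
    filter_upwards [ae_restrict_mem measurableSet_Ioc] with v hv
    exact (shift_int f hf0 τ v hv.1 hint1).1
  have hnormint : ∀ v ∈ Set.Ioc (0:ℝ) 2,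
      (∫ t, ‖F v t‖ ∂ν) = Real.exp (-τ * v) * La := by
    intro v hv
    have h1 : (fun t => ‖F v t‖) = fun t => Real.exp (-τ * t) * |f (t - v)| := by
      funext t
      rw [hF]
      simp only [Real.norm_eq_abs, abs_mul, abs_of_pos (Real.exp_pos _)]
    rw [h1, hν]
    exact (shift_int (fun t => |f t|) habs0 τ v hv.1 hinta).2
  have hnorm : Integrable (fun v => ∫ t, ‖F v t‖ ∂ν) μ := by
    have hcont : Integrable (fun v => Real.exp (-τ * v) * La) μ := by
      apply Continuous.integrableOn_Ioc
      exact (Real.continuous_exp.comp (continuous_const.mul continuous_id)).mul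
        continuous_const
    refine hcont.congr ?_
    rw [hμ]
    filter_upwards [ae_restrict_mem measurableSet_Ioc] with v hv
    exact (hnormint v hv).symm
  have hprod : Integrable (Function.uncurry F) (μ.prod ν) :=
    (integrable_prod_iff hFmeas).2 ⟨hsec, hnorm⟩
  -- rewrite the interval integral as a set integral of shifted f
  have hT : ∀ t : ℝ, (∫ u in (t - 2)..t, f u) = ∫ v in Set.Ioc (0:ℝ) 2, f (t - v) := by
    intro t
    have h0 : (∫ x in (0:ℝ)..2, f (t - x)) = ∫ x in (t - 2)..(t - 0), f x :=
      intervalIntegral.integral_comp_sub_left f t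
    rw [sub_zero] at h0
    rw [← h0, intervalIntegral.integral_of_le (by norm_num : (0:ℝ) ≤ 2)]
  have hmarg : ∀ t : ℝ, Real.exp (-τ * t) * (∫ u in (t - 2)..t, f u)
      = ∫ v, F v t ∂μ := by
    intro t
    rw [hT t, hμ, ← integral_const_mul]
  -- integrability of the convolution term
  have hint3 : IntegrableOn
      (fun t => Real.exp (-τ * t) * (∫ u in (t - 2)..t, f u)) (Set.Ioi 0) := by
    have := hprod.integral_prod_right
    refine this.congr (Filter.Eventually.of_forall fun t => ?_)
    exact (hmarg t).symm
  -- value of the convolution term via Fubini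
  have hswap : (∫ t, ∫ v, F v t ∂μ ∂ν) = ∫ v, ∫ t, F v t ∂ν ∂μ :=
    (integral_integral_swap hprod).symm
  have hexpint : ∫ v in Set.Ioc (0:ℝ) 2, Real.exp (-τ * v)
      = (1 - Real.exp (-2 * τ)) / τ := by
    rw [← intervalIntegral.integral_of_le (by norm_num : (0:ℝ) ≤ 2)]
    have hderiv : ∀ x ∈ Set.uIcc (0:ℝ) 2,
        HasDerivAt (fun y => -Real.exp (-τ * y) / τ) (Real.exp (-τ * x)) x := by
      intro x _
      have h1 : HasDerivAt (fun y : ℝ => -τ * y) (-τ) x := by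
        simpa using (hasDerivAt_id x).const_mul (-τ)
      have h2 := (h1.exp).neg.div_const τ
      refine h2.congr_deriv ?_
      rw [div_eq_iff hτ.ne']; ring
    rw [intervalIntegral.integral_eq_sub_of_hasDerivAt hderiv
      (by apply Continuous.intervalIntegrable; continuity)]
    rw [show -τ * 2 = -2 * τ by ring]
    simp
    ring
  have hconv : (∫ t in Set.Ioi (0:ℝ),
      Real.exp (-τ * t) * (∫ u in (t - 2)..t, f u))
      = L * ((1 - Real.exp (-2 * τ)) / τ) := by
    have e1 : (∫ t in Set.Ioi (0:ℝ),
        Real.exp (-τ * t) * (∫ u in (t - 2)..t, f u)) = ∫ t, ∫ v, F v t ∂μ ∂ν := by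
      rw [hν]; exact setIntegral_congr_fun hms fun t _ => hmarg t
    rw [e1, hswap]
    have e2 : (∫ v, ∫ t, F v t ∂ν ∂μ) = ∫ v in Set.Ioc (0:ℝ) 2, Real.exp (-τ * v) * L := by
      rw [hμ]
      refine setIntegral_congr_fun measurableSet_Ioc fun v hv => ?_
      rw [hν]
      exact (shift_int f hf0 τ v hv.1 hint1).2
    rw [e2, integral_mul_const, hexpint]
    ring
  -- split the main integral
  have hsplit : (∫ t in Set.Ioi (0 : ℝ), Real.exp (-τ * t) *
        (((1 + α) / 2) * f t + ((1 - α) / 2) * f (t - 2)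
          - (1 / 2) * ∫ u in (t - 2)..t, f u))
      = ((1 + α) / 2) * L + ((1 - α) / 2) * (Real.exp (-τ * 2) * L)
        - (1 / 2) * (L * ((1 - Real.exp (-2 * τ)) / τ)) := by
    have e0 : ∀ t : ℝ, Real.exp (-τ * t) *
        (((1 + α) / 2) * f t + ((1 - α) / 2) * f (t - 2)
          - (1 / 2) * ∫ u in (t - 2)..t, f u)
        = ((1 + α) / 2) * (Real.exp (-τ * t) * f t)
          + ((1 - α) / 2) * (Real.exp (-τ * t) * f (t - 2))
          - (1 / 2) * (Real.exp (-τ * t) * ∫ u in (t - 2)..t, f u) := by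
      intro t; ring
    simp_rw [e0]
    have hA : IntegrableOn (fun t => (1 + α) / 2 * (Real.exp (-τ * t) * f t)
        + (1 - α) / 2 * (Real.exp (-τ * t) * f (t - 2))) (Set.Ioi 0) :=
      (hint1.const_mul _).add (hi2.const_mul _)
    have hB : IntegrableOn (fun t => (1 / 2 : ℝ)
        * (Real.exp (-τ * t) * ∫ u in (t - 2)..t, f u)) (Set.Ioi 0) :=
      hint3.const_mul _
    rw [integral_sub hA hB, integral_add (hint1.const_mul _) (hi2.const_mul _),
      integral_const_mul, integral_const_mul, integral_const_mul, he2, hconv]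
  rw [hsplit]
  rw [show -τ * 2 = -2 * τ by ring]
  field_simp
  ring

end
end

section
/- Let a > 0 and b > 0 be real numbers, and let k₁, k₂ ∈ ℝ. Suppose A, G, P ∈ ℝ satisfy A ≥ 0, G > 0, P ≥ 0, together with the two relations G + (k₂² − k₁²) A + (a k₂ + b) P = 0 and 2 k₂ A + a P = 0. Then k₁² + (k₂ + b/a)² > (b/a)². Consequently, the interior impedance boundary value problem has no eigenvalue k = k₁ + i k₂ with k₁ ≠ 0 lying in the closed disk k₁² + (k₂ + b/a)² ≤ (b/a)² off the imaginary axis. -/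
/-!
STATEMENT 12: If `a, b > 0` and `A ≥ 0`, `G > 0`, `P ≥ 0` satisfy
`G + (k₂² − k₁²) A + (a k₂ + b) P = 0` and `2 k₂ A + a P = 0`
(the real and imaginary parts of Green's identity for a nontrivial impedance eigenfunction,
with `A = ∫_D |u|²`, `G = ∫_D |∇u|²`, `P = ∫_{∂D} |u|²`), then
`k₁² + (k₂ + b/a)² > (b/a)²`: the interior impedance problem has no eigenvalue off the
imaginary axis in the closed disk `k₁² + (k₂ + b/a)² ≤ (b/a)²`.
-/

theorem impedance_pole_free_disk
    (a b : ℝ) (ha : 0 < a) (hb : 0 < b) (k₁ k₂ : ℝ)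
    (A G P : ℝ) (hA : 0 ≤ A) (hG : 0 < G) (hP : 0 ≤ P)
    (h1 : G + (k₂ ^ 2 - k₁ ^ 2) * A + (a * k₂ + b) * P = 0)
    (h2 : 2 * k₂ * A + a * P = 0) :
    k₁ ^ 2 + (k₂ + b / a) ^ 2 > (b / a) ^ 2 := by
  have hA' : 0 < A := by
    rcases hA.lt_or_eq with h | h
    · exact h
    · exfalso
      have hap : a * P = 0 := by rw [← h] at h2; simpa using h2
      have hP0 : P = 0 := (mul_eq_zero.mp hap).resolve_left ha.ne'
      rw [← h, hP0] at h1
      simp at h1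
      linarith
  have key : a * G = A * (a * k₁ ^ 2 + a * k₂ ^ 2 + 2 * b * k₂) := by
    linear_combination h1 * a - (a * k₂ + b) * h2
  have h3 : 0 < a * k₁ ^ 2 + a * k₂ ^ 2 + 2 * b * k₂ := by
    by_contra h
    push_neg at h
    nlinarith
  have : k₁ ^ 2 + (k₂ + b / a) ^ 2 - (b / a) ^ 2 = (a * k₁ ^ 2 + a * k₂ ^ 2 + 2 * b * k₂) / a := by
    field_simp; ring
  linarith [div_pos h3 ha, this]
end
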